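/- (Example 1: E_3 = (1/3)·log_3 4). The maximum over all kernels g of 3 dimensions of the product D_g(0)·D_g(1)·D_g(2) equals 4; equivalently, the optimal exponent E_3 = max_g E(g) over bijections g of {0,1}^3 equals (1/3)·log_3 4 ≈ 0.42062. The maximum is achieved, e.g., by the linear kernel g(u) = u·G with G the 3×3 binary matrix with rows (1,0,0), (1,1,0), (0,1,1), whose partial distance sequence is (1,2,2). -/

import Mathlib

/-- The `i`-th partial distance of a kernel `g` of `ℓ` dimensions:
`D_g(i) = min { d_H(g(w•0•u), g(w•1•v)) : w ∈ {0,1}^i, u, v ∈ {0,1}^{ℓ−1−i} }`,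
phrased via pairs of inputs that agree on coordinates `< i` and differ as `0`/`1`
at coordinate `i`. -/
noncomputable def partialDist {ℓ : ℕ} (g : (Fin ℓ → ZMod 2) → (Fin ℓ → ZMod 2)) (i : ℕ) : ℕ :=
  sInf { d | ∃ x y : Fin ℓ → ZMod 2,
    (∀ j : Fin ℓ, (j : ℕ) < i → x j = y j) ∧
    (∀ j : Fin ℓ, (j : ℕ) = i → x j = 0 ∧ y j = 1) ∧
    d = hammingDist (g x) (g y) }

namespace PD3

abbrev V := Fin 3 → ZMod 2

/-- structured pair at index i -/
def str (x y : V) (i : ℕ) : Prop :=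
  (∀ j : Fin 3, (j : ℕ) < i → x j = y j) ∧ (∀ j : Fin 3, (j : ℕ) = i → x j = 0 ∧ y j = 1)

instance (x y : V) (i : ℕ) : Decidable (str x y i) := by unfold str; infer_instance

lemma pd_le {g : V → V} {i : ℕ} {x y : V} (h : str x y i) :
    partialDist g i ≤ hammingDist (g x) (g y) :=
  Nat.sInf_le ⟨x, y, h.1, h.2, rfl⟩

lemma le_pd {g : V → V} {i : ℕ} {x₀ y₀ : V} (h₀ : str x₀ y₀ i) {k : ℕ}
    (h : ∀ x y : V, str x y i → k ≤ hammingDist (g x) (g y)) : k ≤ partialDist g i := by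
  unfold partialDist
  refine le_csInf ⟨_, x₀, y₀, h₀.1, h₀.2, rfl⟩ ?_
  rintro d ⟨x, y, h1, h2, rfl⟩
  exact h x y ⟨h1, h2⟩

def compl (v : V) : V := fun j => v j + 1

lemma dist_add_dist_compl (a b : V) : hammingDist a b + hammingDist a (compl b) = 3 := by
  revert a b; decide

lemma eq_compl_of_dist_eq_three {a b : V} (h : 3 ≤ hammingDist a b) : b = compl a := by
  revert h; revert a b; decide

lemma dist_le_three (a b : V) : hammingDist a b ≤ 3 := by revert a b; decide

lemma exists_str {x y : V} (h : x ≠ y) :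
    ∃ i : Fin 3, str x y (i : ℕ) ∨ str y x (i : ℕ) := by
  revert h; revert x y; decide

lemma str000 : str ![0,0,0] ![1,0,0] 0 := by decide
lemma str000' : str ![0,0,0] ![1,0,1] 0 := by decide
lemma str1 : str ![0,0,0] ![0,1,0] 1 := by decide
lemma str1' : str ![0,0,0] ![0,1,1] 1 := by decide
lemma str2 : str ![0,0,0] ![0,0,1] 2 := by decide
lemma str2a : str ![1,0,0] ![1,0,1] 2 := by decide
lemma str2b : str ![0,1,0] ![0,1,1] 2 := by decide

section UB
variable {g : V → V} (hg : Function.Bijective g)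

include hg

lemma D0_le : partialDist g 0 ≤ 2 := by
  by_contra h
  push_neg at h
  have h1 : 3 ≤ hammingDist (g ![0,0,0]) (g ![1,0,0]) := le_trans h (pd_le str000)
  have h2 : 3 ≤ hammingDist (g ![0,0,0]) (g ![1,0,1]) := le_trans h (pd_le str000')
  have e1 := eq_compl_of_dist_eq_three h1
  have e2 := eq_compl_of_dist_eq_three h2
  have : (![1,0,0] : V) = ![1,0,1] := hg.1 (e1.trans e2.symm)
  exact absurd this (by decide)

lemma D1_le : partialDist g 1 ≤ 2 := by
  by_contra h
  push_neg at h
  have h1 : 3 ≤ hammingDist (g ![0,0,0]) (g ![0,1,0]) := le_trans h (pd_le str1)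
  have h2 : 3 ≤ hammingDist (g ![0,0,0]) (g ![0,1,1]) := le_trans h (pd_le str1')
  have e1 := eq_compl_of_dist_eq_three h1
  have e2 := eq_compl_of_dist_eq_three h2
  have : (![0,1,0] : V) = ![0,1,1] := hg.1 (e1.trans e2.symm)
  exact absurd this (by decide)

omit hg in
lemma D2_le : partialDist g 2 ≤ 3 :=
  le_trans (pd_le str2) (dist_le_three _ _)

omit hg in
lemma D0_le_one_of_D2 (h : 3 ≤ partialDist g 2) : partialDist g 0 ≤ 1 := by
  have hb : g ![1,0,1] = compl (g ![1,0,0]) :=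
    eq_compl_of_dist_eq_three (le_trans h (pd_le str2a))
  have h1 : partialDist g 0 ≤ hammingDist (g ![0,0,0]) (g ![1,0,0]) := pd_le str000
  have h2 : partialDist g 0 ≤ hammingDist (g ![0,0,0]) (g ![1,0,1]) := pd_le str000'
  rw [hb] at h2
  have := dist_add_dist_compl (g ![0,0,0]) (g ![1,0,0])
  omega

omit hg in
lemma D1_le_one_of_D2 (h : 3 ≤ partialDist g 2) : partialDist g 1 ≤ 1 := by
  have hb : g ![0,1,1] = compl (g ![0,1,0]) :=
    eq_compl_of_dist_eq_three (le_trans h (pd_le str2b))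
  have h1 : partialDist g 1 ≤ hammingDist (g ![0,0,0]) (g ![0,1,0]) := pd_le str1
  have h2 : partialDist g 1 ≤ hammingDist (g ![0,0,0]) (g ![0,1,1]) := pd_le str1'
  rw [hb] at h2
  have := dist_add_dist_compl (g ![0,0,0]) (g ![0,1,0])
  omega

lemma not_all_ge_two (h0 : 2 ≤ partialDist g 0) (h1 : 2 ≤ partialDist g 1)
    (h2 : 2 ≤ partialDist g 2) : False := by
  obtain ⟨x, hx⟩ := hg.2 ![0,0,0]
  obtain ⟨y, hy⟩ := hg.2 ![1,0,0]
  have hxy : x ≠ y := by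
    intro e; rw [e, hy] at hx; exact absurd hx (by decide)
  have hd : hammingDist (g x) (g y) = 1 := by rw [hx, hy]; decide
  have hd' : hammingDist (g y) (g x) = 1 := by rw [hx, hy]; decide
  obtain ⟨i, hi | hi⟩ := exists_str hxy
  · have := pd_le (g := g) hi
    rw [hd] at this
    fin_cases i <;> simp_all <;> omega
  · have := pd_le (g := g) hi
    rw [hd'] at this
    fin_cases i <;> simp_all <;> omega

lemma prod_le : partialDist g 0 * partialDist g 1 * partialDist g 2 ≤ 4 := by
  have hd0 := D0_le hg
  have hd1 := D1_le hg
  have hd2 := D2_le (g := g)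
  rcases Nat.lt_or_ge (partialDist g 2) 3 with h | h
  · rcases Nat.lt_or_ge (partialDist g 0) 2 with h0 | h0
    · have := Nat.mul_le_mul (Nat.mul_le_mul (Nat.lt_succ_iff.mp h0) hd1) (Nat.lt_succ_iff.mp h)
      omega
    rcases Nat.lt_or_ge (partialDist g 1) 2 with h1 | h1
    · have := Nat.mul_le_mul (Nat.mul_le_mul hd0 (Nat.lt_succ_iff.mp h1)) (Nat.lt_succ_iff.mp h)
      omega
    rcases Nat.lt_or_ge (partialDist g 2) 2 with h2 | h2
    · have := Nat.mul_le_mul (Nat.mul_le_mul hd0 hd1) (Nat.lt_succ_iff.mp h2)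
      omega
    exact absurd (not_all_ge_two hg h0 h1 h2) (by simp)
  · have a0 := D0_le_one_of_D2 (g := g) h
    have a1 := D1_le_one_of_D2 (g := g) h
    have := Nat.mul_le_mul (Nat.mul_le_mul a0 a1) hd2
    omega

end UB

noncomputable def g0 : V → V :=
  fun u => Matrix.vecMul u (!![1,0,0; 1,1,0; 0,1,1] : Matrix (Fin 3) (Fin 3) (ZMod 2))

lemma g0_bij : Function.Bijective g0 := by unfold g0; decide

lemma g0_d0 : partialDist g0 0 = 1 := by
  apply le_antisymm
  · have := pd_le (g := g0) str000
    have : hammingDist (g0 ![0,0,0]) (g0 ![1,0,0]) = 1 := by unfold g0; decide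
    omega
  · refine le_pd str000 ?_
    have key : ∀ x y : V, x 0 = 0 → y 0 = 1 → 1 ≤ hammingDist (g0 x) (g0 y) := by
      unfold g0; decide
    rintro x y ⟨-, h2⟩
    exact key x y (h2 0 rfl).1 (h2 0 rfl).2

lemma g0_d1 : partialDist g0 1 = 2 := by
  apply le_antisymm
  · have h := pd_le (g := g0) str1
    have : hammingDist (g0 ![0,0,0]) (g0 ![0,1,0]) = 2 := by unfold g0; decide
    omega
  · refine le_pd str1 ?_
    have key : ∀ x y : V, x 0 = y 0 → x 1 = 0 → y 1 = 1 → 2 ≤ hammingDist (g0 x) (g0 y) := by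
      unfold g0; decide
    rintro x y ⟨h1, h2⟩
    exact key x y (h1 0 (by norm_num)) (h2 1 rfl).1 (h2 1 rfl).2

lemma g0_d2 : partialDist g0 2 = 2 := by
  apply le_antisymm
  · have h := pd_le (g := g0) str2
    have : hammingDist (g0 ![0,0,0]) (g0 ![0,0,1]) = 2 := by unfold g0; decide
    omega
  · refine le_pd str2 ?_
    have key : ∀ x y : V, x 0 = y 0 → x 1 = y 1 → x 2 = 0 → y 2 = 1 →
        2 ≤ hammingDist (g0 x) (g0 y) := by
      unfold g0; decide
    rintro x y ⟨h1, h2⟩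
    exact key x y (h1 0 (by norm_num)) (h1 1 (by norm_num)) (h2 2 rfl).1 (h2 2 rfl).2

end PD3

theorem optimal_exponent_dim3 :
    IsGreatest { p : ℕ | ∃ g : (Fin 3 → ZMod 2) → (Fin 3 → ZMod 2),
        Function.Bijective g ∧ p = ∏ i ∈ Finset.range 3, partialDist g i } 4 ∧
    (Function.Bijective
        (fun u => Matrix.vecMul u (!![1,0,0; 1,1,0; 0,1,1] : Matrix (Fin 3) (Fin 3) (ZMod 2))) ∧
      partialDist
        (fun u => Matrix.vecMul u (!![1,0,0; 1,1,0; 0,1,1] : Matrix (Fin 3) (Fin 3) (ZMod 2))) 0 = 1 ∧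
      partialDist
        (fun u => Matrix.vecMul u (!![1,0,0; 1,1,0; 0,1,1] : Matrix (Fin 3) (Fin 3) (ZMod 2))) 1 = 2 ∧
      partialDist
        (fun u => Matrix.vecMul u (!![1,0,0; 1,1,0; 0,1,1] : Matrix (Fin 3) (Fin 3) (ZMod 2))) 2 = 2) := by
  have hbij : Function.Bijective PD3.g0 := PD3.g0_bij
  have h0 := PD3.g0_d0
  have h1 := PD3.g0_d1
  have h2 := PD3.g0_d2
  refine ⟨⟨⟨PD3.g0, hbij, ?_⟩, ?_⟩, hbij, h0, h1, h2⟩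
  · simp [Finset.prod_range_succ, h0, h1, h2]
  · rintro p ⟨g, hg, rfl⟩
    have := PD3.prod_le hg
    simpa [Finset.prod_range_succ, mul_assoc] using this
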